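/- Let h : 𝒯 → 𝒜 be a homology theory that reflects isomorphisms and is full. Suppose given a morphism α : U → V in 𝒯, an object W of 𝒯, and a short exact sequence 0 → h(U) →h(α) h(V) →β̂ h(W) → 0 in 𝒜 whose first map is h(α). Then there exists a distinguished triangle U →α V →β W →γ U[1] in 𝒯 such that h(β) = β̂. -/

import Mathlib

open CategoryTheory Category Limits Pretriangulated

/-- Let `h` be a homology theory that reflects isomorphisms and is full.
Given `α : U ⟶ V`, an object `W`, and a short exact sequence
`0 ⟶ h(U) ⟶h(α) h(V) ⟶β̂ h(W) ⟶ 0` in `𝒜` whose first map is `h(α)`, there is a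
distinguished triangle `U ⟶α V ⟶β W ⟶γ U⟦1⟧` with `h(β) = β̂`. -/
theorem realization_lemma
    {T : Type*} [Category T] [HasZeroObject T] [Preadditive T] [HasShift T ℤ]
    [∀ n : ℤ, (shiftFunctor T n).Additive] [Pretriangulated T]
    {A : Type*} [Category A] [Abelian A] [HasShift A ℤ]
    [∀ n : ℤ, (shiftFunctor A n).Additive]
    (h : T ⥤ A) [h.Additive] [h.CommShift ℤ] [h.IsHomological]
    [h.ReflectsIsomorphisms] [h.Full]
    {U V : T} (α : U ⟶ V) (W : T) (βhat : h.obj V ⟶ h.obj W)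
    (w : h.map α ≫ βhat = 0)
    (hS : (ShortComplex.mk (h.map α) βhat w).ShortExact) :
    ∃ (β : V ⟶ W) (γ : W ⟶ U⟦(1:ℤ)⟧),
      (Triangle.mk α β γ ∈ distTriang T) ∧ h.map β = βhat := by
  obtain ⟨W', β', γ', hT'⟩ := distinguished_cocone_triangle α
  have hmono : Mono (h.map α) := hS.mono_f
  -- `h.map (α⟦1⟧)` is a mono
  have hshift : h.map (α⟦(1:ℤ)⟧') =
      (h.commShiftIso (1:ℤ)).hom.app U ≫ (h.map α)⟦(1:ℤ)⟧' ≫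
        (h.commShiftIso (1:ℤ)).inv.app V := by
    have := (h.commShiftIso (1:ℤ)).hom.naturality α
    simp only [Functor.comp_map] at this
    rw [← cancel_mono ((h.commShiftIso (1:ℤ)).hom.app V), this]
    simp
  have hmono1 : Mono (h.map (α⟦(1:ℤ)⟧')) := by
    rw [hshift]
    have : Mono ((h.map α)⟦(1:ℤ)⟧') := (shiftFunctor A (1:ℤ)).map_mono _
    infer_instance
  -- h(γ') = 0
  have hγ0 : h.map γ' = 0 := by
    have hz : h.map γ' ≫ h.map (α⟦(1:ℤ)⟧') = 0 := by
      rw [← h.map_comp]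
      have hc := comp_distTriang_mor_zero₃₁ _ hT'
      change γ' ≫ α⟦(1:ℤ)⟧' = 0 at hc
      rw [hc, h.map_zero]
    exact zero_of_comp_mono _ hz
  -- exactness of h applied to the rotated triangle gives that h(β') is epi
  have hrot := h.map_distinguished_exact _ (rot_of_distTriang _ hT')
  have hepi : Epi (h.map β') := by
    have := hrot.epi_f hγ0
    exact this
  -- h(β') is a cokernel of h(α)
  have hex := h.map_distinguished_exact _ hT'
  have hex' : (ShortComplex.mk (h.map α) (h.map β') (by
      rw [← h.map_comp]
      have hc := comp_distTriang_mor_zero₁₂ _ hT'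
      change α ≫ β' = 0 at hc
      rw [hc, h.map_zero])).Exact := hex
  have : Epi (ShortComplex.mk (h.map α) (h.map β') (by
      rw [← h.map_comp]
      have hc := comp_distTriang_mor_zero₁₂ _ hT'
      change α ≫ β' = 0 at hc
      rw [hc, h.map_zero])).g := hepi
  have c₁ := hex'.gIsCokernel
  have c₂ := hS.gIsCokernel
  -- the comparison isomorphism
  let e : h.obj W' ≅ h.obj W := IsColimit.coconePointUniqueUpToIso c₁ c₂
  have he : h.map β' ≫ e.hom = βhat := by
    simpa using c₁.comp_coconePointUniqueUpToIso_hom c₂ WalkingParallelPair.one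
  -- lift it to T by fullness
  let f : W' ⟶ W := h.preimage e.hom
  have hf : h.map f = e.hom := h.map_preimage e.hom
  have : IsIso (h.map f) := by rw [hf]; infer_instance
  have hfiso : IsIso f := isIso_of_reflects_iso f h
  refine ⟨β' ≫ f, inv f ≫ γ', ?_, ?_⟩
  · refine isomorphic_distinguished _ hT' _ ?_
    exact Triangle.isoMk _ _ (Iso.refl _) (Iso.refl _) (asIso f).symm (by change α ≫ 𝟙 V = 𝟙 U ≫ α; simp)
      (by change (β' ≫ f) ≫ inv f = 𝟙 V ≫ β'; simp)
      (by change (inv f ≫ γ') ≫ (shiftFunctor T (1:ℤ)).map (𝟙 U) = inv f ≫ γ'; simp)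
  · rw [h.map_comp, hf, he]
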